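/- Let f : ℝⁿ → ℝ be given by f(x) = −(x₁² + ⋯ + x_k²) for some 1 ≤ k ≤ n, and let m : ℝⁿ → ℝ be a continuous compactly supported function. Then as t → +∞, the integrals t^{k/2} ∫_{ℝⁿ} g(x)·e^{t f(x)}·m(x) dx converge, for every bounded continuous test function g, to π^{k/2} ∫_{{x₁=⋯=x_k=0}} g(0,…,0,x_{k+1},…,x_n)·m(0,…,0,x_{k+1},…,x_n) dx_{k+1}⋯dx_n. -/

import Mathlib

open MeasureTheory Filter Real

lemma gauss_prod_form (k : ℕ) (u : Fin k → ℝ) :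
    Real.exp (-(∑ i, (u i)^2)) = ∏ i, Real.exp (-(u i)^2) := by
  rw [← Real.exp_sum, ← Finset.sum_neg_distrib]

lemma gauss_integrable (k : ℕ) :
    Integrable (fun u : Fin k → ℝ => Real.exp (-(∑ i, (u i)^2))) := by
  have h1 : Integrable (fun x : ℝ => Real.exp (-x^2)) := by
    simpa using integrable_exp_neg_mul_sq (one_pos)
  have := Integrable.fintype_prod (f := fun (_ : Fin k) (x : ℝ) => Real.exp (-x^2))
    (fun _ => h1)
  exact this.congr (by
    filter_upwards with u
    rw [gauss_prod_form])

lemma gauss_value (k : ℕ) :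
    ∫ u : Fin k → ℝ, Real.exp (-(∑ i, (u i)^2)) = π ^ ((k:ℝ)/2) := by
  have h1 : ∫ x : ℝ, Real.exp (-x^2) = Real.sqrt π := by
    simpa using integral_gaussian 1
  calc ∫ u : Fin k → ℝ, Real.exp (-(∑ i, (u i)^2))
      = ∫ u : Fin k → ℝ, ∏ i, Real.exp (-(u i)^2) := by
        congr 1; ext u; exact gauss_prod_form k u
    _ = (∫ x : ℝ, Real.exp (-x^2)) ^ k := by
        rw [volume_pi, integral_fintype_prod_eq_pow (ι := Fin k) (fun x : ℝ => Real.exp (-x^2))]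
        simp
    _ = (Real.sqrt π) ^ k := by rw [h1]
    _ = π ^ ((k:ℝ)/2) := by
        rw [Real.sqrt_eq_rpow, ← Real.rpow_natCast (π ^ ((1:ℝ)/2)) k,
          ← Real.rpow_mul (le_of_lt Real.pi_pos)]
        ring_nf

lemma sqrt_pow_eq_rpow {t : ℝ} (ht : 0 ≤ t) (k : ℕ) :
    (Real.sqrt t) ^ k = t ^ ((k:ℝ)/2) := by
  rw [Real.sqrt_eq_rpow, ← Real.rpow_natCast (t ^ ((1:ℝ)/2)) k, ← Real.rpow_mul ht]
  congr 1; ring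

theorem stmt_5 (k l : ℕ) (hk : 1 ≤ k)
    (m g : ((Fin k → ℝ) × (Fin l → ℝ)) → ℝ)
    (hm : Continuous m) (hmc : HasCompactSupport m)
    (hg : Continuous g) (hgb : ∃ C : ℝ, ∀ x, |g x| ≤ C) :
    Tendsto
      (fun t : ℝ => t ^ ((k:ℝ)/2) *
        ∫ x : (Fin k → ℝ) × (Fin l → ℝ),
          g x * Real.exp (t * (-(∑ i, (x.1 i)^2))) * m x)
      atTop
      (nhds (π ^ ((k:ℝ)/2) * ∫ y : Fin l → ℝ, g (0, y) * m (0, y))) := by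
  classical
  obtain ⟨C, hC⟩ := hgb
  have hC0 : 0 ≤ C := le_trans (abs_nonneg _) (hC 0)
  obtain ⟨M, hM⟩ := hmc.exists_bound_of_continuous hm
  have hM0 : 0 ≤ M := le_trans (norm_nonneg _) (hM 0)
  set K : Set (Fin l → ℝ) := Prod.snd '' tsupport m with hKdef
  have hKc : IsCompact K := hmc.image continuous_snd
  have hmzero : ∀ z : (Fin k → ℝ) × (Fin l → ℝ), z.2 ∉ K → m z = 0 := by
    intro z hz
    by_contra h
    exact hz ⟨z, subset_tsupport m h, rfl⟩
  set bound : ((Fin k → ℝ) × (Fin l → ℝ)) → ℝ :=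
    fun z => (C * M) * (Real.exp (-(∑ i, (z.1 i)^2)) * K.indicator (fun _ => (1:ℝ)) z.2)
    with hbdef
  have hbound_int : Integrable bound := by
    have hY : Integrable (K.indicator (fun _ => (1:ℝ))) := by
      rw [integrable_indicator_iff hKc.measurableSet]
      exact integrableOn_const hKc.measure_lt_top.ne
    have h2 := (gauss_integrable k).mul_prod hY
    rw [← Measure.volume_eq_prod] at h2
    exact h2.const_mul (C * M)
  set F : ℝ → ((Fin k → ℝ) × (Fin l → ℝ)) → ℝ :=
    fun t z => g ((Real.sqrt t)⁻¹ • z.1, z.2) * Real.exp (-(∑ i, (z.1 i)^2)) *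
      m ((Real.sqrt t)⁻¹ • z.1, z.2) with hFdef
  have hFcont : ∀ t, Continuous (F t) := by
    intro t
    have hp : Continuous fun z : (Fin k → ℝ) × (Fin l → ℝ) =>
        ((Real.sqrt t)⁻¹ • z.1, z.2) :=
      (continuous_fst.const_smul (Real.sqrt t)⁻¹).prodMk continuous_snd
    have hexp : Continuous fun z : (Fin k → ℝ) × (Fin l → ℝ) =>
        Real.exp (-(∑ i, (z.1 i)^2)) := by fun_prop
    exact ((hg.comp hp).mul hexp).mul (hm.comp hp)
  have hFbound : ∀ t, ∀ z, ‖F t z‖ ≤ bound z := by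
    intro t z
    have h2 : |m ((Real.sqrt t)⁻¹ • z.1, z.2)| ≤ M * K.indicator (fun _ => (1:ℝ)) z.2 := by
      by_cases hz : z.2 ∈ K
      · simpa [Set.indicator_of_mem hz] using
          (by simpa [Real.norm_eq_abs] using hM ((Real.sqrt t)⁻¹ • z.1, z.2))
      · simp [Set.indicator_of_notMem hz, hmzero ((Real.sqrt t)⁻¹ • z.1, z.2) hz]
    have h1 := hC ((Real.sqrt t)⁻¹ • z.1, z.2)
    have he : (0:ℝ) ≤ Real.exp (-(∑ i, (z.1 i)^2)) := (Real.exp_pos _).le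
    have hmm := mul_le_mul (mul_le_mul h1 le_rfl he hC0) h2 (abs_nonneg _) (by positivity)
    calc ‖F t z‖ = |g ((Real.sqrt t)⁻¹ • z.1, z.2)| * Real.exp (-(∑ i, (z.1 i)^2)) *
          |m ((Real.sqrt t)⁻¹ • z.1, z.2)| := by
          simp only [hFdef, Real.norm_eq_abs, abs_mul, Real.abs_exp]
      _ ≤ C * Real.exp (-(∑ i, (z.1 i)^2)) * (M * K.indicator (fun _ => (1:ℝ)) z.2) := hmm
      _ = bound z := by simp only [hbdef]; ring
  set L : ((Fin k → ℝ) × (Fin l → ℝ)) → ℝ :=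
    fun z => g (0, z.2) * Real.exp (-(∑ i, (z.1 i)^2)) * m (0, z.2) with hLdef
  have hsq : Tendsto Real.sqrt atTop atTop := by
    apply Tendsto.congr' _ (tendsto_rpow_atTop (y := (1:ℝ)/2) (by norm_num))
    filter_upwards [eventually_ge_atTop (0:ℝ)] with t ht
    exact (Real.sqrt_eq_rpow t).symm
  have hs0 : Tendsto (fun t : ℝ => (Real.sqrt t)⁻¹) atTop (nhds 0) :=
    tendsto_inv_atTop_zero.comp hsq
  have hlim : ∀ z, Tendsto (fun t => F t z) atTop (nhds (L z)) := by
    intro z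
    have h1 : Tendsto (fun t : ℝ => (Real.sqrt t)⁻¹ • z.1) atTop (nhds 0) := by
      simpa using hs0.smul_const z.1
    have hp : Tendsto (fun t : ℝ => ((Real.sqrt t)⁻¹ • z.1, z.2)) atTop (nhds (0, z.2)) :=
      h1.prodMk_nhds tendsto_const_nhds
    exact (((hg.tendsto _).comp hp).mul tendsto_const_nhds).mul ((hm.tendsto _).comp hp)
  have key2 : Tendsto (fun t => ∫ z, F t z) atTop (nhds (∫ z, L z)) := by
    apply tendsto_integral_filter_of_dominated_convergence bound
    · exact Eventually.of_forall fun t => (hFcont t).aestronglyMeasurable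
    · exact Eventually.of_forall fun t => Eventually.of_forall fun z => hFbound t z
    · exact hbound_int
    · exact Eventually.of_forall hlim
  have hLval : ∫ z, L z = π ^ ((k:ℝ)/2) * ∫ y, g (0, y) * m (0, y) := by
    have h1 : ∫ z : (Fin k → ℝ) × (Fin l → ℝ), L z
        = ∫ z : (Fin k → ℝ) × (Fin l → ℝ),
            (fun u : Fin k → ℝ => Real.exp (-(∑ i, (u i)^2))) z.1 *
            (fun y => g (0, y) * m (0, y)) z.2 := by
      congr 1; funext z; simp only [hLdef]; ring
    rw [h1, Measure.volume_eq_prod,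
      integral_prod_mul (fun u : Fin k → ℝ => Real.exp (-(∑ i, (u i)^2)))
        (fun y : Fin l → ℝ => g (0, y) * m (0, y)), gauss_value]
  have hmain : ∀ t : ℝ, 1 ≤ t →
      t ^ ((k:ℝ)/2) * (∫ x : (Fin k → ℝ) × (Fin l → ℝ),
        g x * Real.exp (t * (-(∑ i, (x.1 i)^2))) * m x) = ∫ z, F t z := by
    intro t ht1
    have ht : 0 < t := lt_of_lt_of_le one_pos ht1
    set G : ((Fin k → ℝ) × (Fin l → ℝ)) → ℝ :=
      fun x => g x * Real.exp (t * (-(∑ i, (x.1 i)^2))) * m x with hGdef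
    have hGcont : Continuous G := by
      have hexp : Continuous fun x : (Fin k → ℝ) × (Fin l → ℝ) =>
          Real.exp (t * (-(∑ i, (x.1 i)^2))) := by fun_prop
      exact (hg.mul hexp).mul hm
    have hGint : Integrable G := by
      refine Integrable.mono' (((hm.integrable_of_hasCompactSupport hmc).norm).const_mul C)
        hGcont.aestronglyMeasurable ?_
      filter_upwards with x
      have hS : (0:ℝ) ≤ ∑ i, (x.1 i)^2 := Finset.sum_nonneg fun i _ => sq_nonneg _
      have he : Real.exp (t * (-(∑ i, (x.1 i)^2))) ≤ 1 := by
        rw [Real.exp_le_one_iff]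
        exact mul_nonpos_of_nonneg_of_nonpos ht.le (neg_nonpos.2 hS)
      have h1 := mul_le_mul (mul_le_mul (hC x) he (Real.exp_pos _).le hC0) le_rfl
        (abs_nonneg (m x)) (by positivity)
      calc ‖G x‖ = |g x| * Real.exp (t * (-(∑ i, (x.1 i)^2))) * |m x| := by
            simp only [hGdef, Real.norm_eq_abs, abs_mul, Real.abs_exp]
        _ ≤ C * 1 * |m x| := h1
        _ = C * ‖m x‖ := by rw [Real.norm_eq_abs]; ring
    have hFint : Integrable (F t) :=
      hbound_int.mono' (hFcont t).aestronglyMeasurable (Eventually.of_forall (hFbound t))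
    have hts : ∀ u : Fin k → ℝ,
        t * (-(∑ i, (((Real.sqrt t)⁻¹ • u) i)^2)) = -(∑ i, (u i)^2) := by
      intro u
      have h1 : ((Real.sqrt t)⁻¹)^2 = t⁻¹ := by
        rw [inv_pow, Real.sq_sqrt ht.le]
      simp only [Pi.smul_apply, smul_eq_mul, mul_pow]
      rw [← Finset.mul_sum, h1, mul_neg, ← mul_assoc, mul_inv_cancel₀ ht.ne', one_mul]
    have hscale : ∀ y : Fin l → ℝ,
        t ^ ((k:ℝ)/2) * ∫ u : Fin k → ℝ, G (u, y) = ∫ u : Fin k → ℝ, F t (u, y) := by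
      intro y
      have hcv := Measure.integral_comp_inv_smul_of_nonneg (volume : Measure (Fin k → ℝ))
        (fun u => G (u, y)) (Real.sqrt_nonneg t)
      rw [Module.finrank_fin_fun, smul_eq_mul, sqrt_pow_eq_rpow ht.le] at hcv
      rw [← hcv]
      congr 1
      funext u
      simp only [hGdef, hFdef]
      rw [hts u]
    have hGint' : Integrable G (volume.prod volume) := by rwa [Measure.volume_eq_prod] at hGint
    have hFint' : Integrable (F t) (volume.prod volume) := by rwa [Measure.volume_eq_prod] at hFint
    rw [show (∫ x : (Fin k → ℝ) × (Fin l → ℝ),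
        g x * Real.exp (t * (-(∑ i, (x.1 i)^2))) * m x) = ∫ x, G x from rfl]
    rw [Measure.volume_eq_prod, integral_prod_symm G hGint', integral_prod_symm (F t) hFint',
      ← integral_const_mul]
    exact integral_congr_ae (Eventually.of_forall fun y => hscale y)
  have heq : (fun t : ℝ => ∫ z, F t z) =ᶠ[atTop]
      (fun t : ℝ => t ^ ((k:ℝ)/2) *
        ∫ x : (Fin k → ℝ) × (Fin l → ℝ),
          g x * Real.exp (t * (-(∑ i, (x.1 i)^2))) * m x) := by
    filter_upwards [eventually_ge_atTop (1:ℝ)] with t ht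
    exact (hmain t ht).symm
  exact Tendsto.congr' heq (hLval ▸ key2)
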